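/- Let κ ∈ {1, −1} and let V be a complex vector space with a ℂ-bilinear form B : V × V → ℂ satisfying B(x, y) = κ · B(y, x) for all x, y. Let a₁, …, a_m and b₁, …, b_n be vectors in V such that B(a_i, a_j) = 0 and B(b_i, b_j) = 0 for all indices i, j. Assume m + n = 2N is even and form the list (x₁, …, x_{2N}) := (a_m, a_{m−1}, …, a₁, b₁, …, b_n). Define A := (1/N!) · Σ_{σ ∈ S_{2N}} κ^{|σ|} · Π_{j=1}^{N} B(x_{σ(j)}, x_{σ(2N+1−j)}), where κ^{|σ|} denotes the sign of the permutation σ if κ = −1 and equals 1 if κ = 1. Then A = 0 if m ≠ n, and if m = n (= N) then A = 2^n · Σ_{σ ∈ S_n} κ^{|σ|} · Π_{j=1}^{n} B(a_j, b_{σ(j)}). -/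

import Mathlib

/-- `κ^{|σ|}`: the sign of the permutation `σ` if `κ = -1`, and `1` if `κ = 1`. -/
noncomputable def ksgn (κ : ℂ) {n : ℕ} (σ : Equiv.Perm (Fin n)) : ℂ :=
  if κ = -1 then ((Equiv.Perm.sign σ : ℤ) : ℂ) else 1



open Finset Equiv Equiv.Perm
set_option linter.unusedSectionVars false

section XEval

variable {V : Type*} [AddCommGroup V] [Module ℂ V]
variable {m n N : ℕ} (hmn : m + n = 2 * N) (a : Fin m → V) (b : Fin n → V)

lemma x_left (i : Fin (2 * N)) (h : (i : ℕ) < m) :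
    Fin.append (fun i => a i.rev) b (Fin.cast hmn.symm i) = a (Fin.rev ⟨i, h⟩) := by
  have e : Fin.cast hmn.symm i = Fin.castAdd n ⟨(i : ℕ), h⟩ := rfl
  rw [e, Fin.append_left]

lemma x_right (i : Fin (2 * N)) (h : ¬ (i : ℕ) < m) :
    Fin.append (fun i => a i.rev) b (Fin.cast hmn.symm i) = b ⟨(i : ℕ) - m, by omega⟩ := by
  have e : Fin.cast hmn.symm i = Fin.natAdd m ⟨(i : ℕ) - m, by omega⟩ := Fin.ext (by simp; omega)
  rw [e, Fin.append_right]

lemma x_zero (B : V →ₗ[ℂ] V →ₗ[ℂ] ℂ)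
    (ha : ∀ i j, B (a i) (a j) = 0) (hb : ∀ i j, B (b i) (b j) = 0)
    (i j : Fin (2 * N)) (hij : (i : ℕ) < m ↔ (j : ℕ) < m) :
    B (Fin.append (fun i => a i.rev) b (Fin.cast hmn.symm i))
      (Fin.append (fun i => a i.rev) b (Fin.cast hmn.symm j)) = 0 := by
  by_cases h : (i : ℕ) < m
  · rw [x_left hmn a b i h, x_left hmn a b j (hij.mp h)]; exact ha _ _
  · rw [x_right hmn a b i h, x_right hmn a b j (fun hj => h (hij.mpr hj))]; exact hb _ _

theorem Equiv.Perm.apply_inv_self {α : Type*} (f : Equiv.Perm α) (x : α) : f (f⁻¹ x) = x :=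
  f.apply_symm_apply x

theorem Equiv.Perm.inv_apply_self {α : Type*} (f : Equiv.Perm α) (x : α) : f⁻¹ (f x) = x :=
  f.symm_apply_apply x

include hmn in
/-- If a permutation pairs every `j < N` with `rev j` in a "mixed" way
(one index below `m`, the other not), then `m = n`. -/
lemma mixed_all_imp_eq (σ : Equiv.Perm (Fin (2 * N)))
    (hall : ∀ j : Fin N, ¬ (((σ (Fin.castLE (Nat.le_mul_of_pos_left N Nat.two_pos) j) : ℕ) < m) ↔
        ((σ (Fin.castLE (Nat.le_mul_of_pos_left N Nat.two_pos) j).rev : ℕ) < m)) ) : m = n := by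
  set h : Equiv.Perm (Fin (2 * N)) := σ * Fin.revPerm * σ⁻¹ with hh
  have hmix : ∀ i : Fin (2 * N), ((i : ℕ) < m ↔ ¬ ((h i : ℕ) < m)) := by
    intro i
    have hhi : h i = σ (Fin.rev (σ⁻¹ i)) := rfl
    by_cases hk : ((σ⁻¹ i : ℕ) < N)
    · have e1 : Fin.castLE (Nat.le_mul_of_pos_left N Nat.two_pos) ⟨(σ⁻¹ i : ℕ), hk⟩ = σ⁻¹ i := Fin.ext rfl
      have := hall ⟨(σ⁻¹ i : ℕ), hk⟩
      rw [e1] at this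
      rw [Equiv.Perm.apply_inv_self] at this
      rw [hhi]
      tauto
    · have hk2 : ((σ⁻¹ i).rev : ℕ) < N := by
        have := (σ⁻¹ i).isLt
        rw [Fin.val_rev]; omega
      have e1 : Fin.castLE (Nat.le_mul_of_pos_left N Nat.two_pos) ⟨((σ⁻¹ i).rev : ℕ), hk2⟩ = (σ⁻¹ i).rev :=
        Fin.ext rfl
      have := hall ⟨((σ⁻¹ i).rev : ℕ), hk2⟩
      rw [e1, Fin.rev_rev, Equiv.Perm.apply_inv_self] at this
      rw [hhi]
      tauto
  classical
  have hcard : (Finset.univ.filter (fun i : Fin (2 * N) => (i : ℕ) < m)).card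
      = (Finset.univ.filter (fun i : Fin (2 * N) => ¬ (i : ℕ) < m)).card := by
    apply Finset.card_bij' (fun i _ => h i) (fun i _ => h⁻¹ i)
    · intro i hi
      simp only [Finset.mem_filter, Finset.mem_univ, true_and] at hi ⊢
      exact (hmix i).mp hi
    · intro i hi
      simp only [Finset.mem_filter, Finset.mem_univ, true_and] at hi ⊢
      have := hmix (h⁻¹ i)
      rw [Equiv.Perm.apply_inv_self] at this
      tauto
    · intro i _; exact Equiv.Perm.inv_apply_self h i
    · intro i _; exact Equiv.Perm.apply_inv_self h i
  have c1 : (Finset.univ.filter (fun i : Fin (2 * N) => (i : ℕ) < m)).card = m := by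
    have hm : m ≤ 2 * N := by omega
    have : (Finset.univ.filter (fun i : Fin (2 * N) => (i : ℕ) < m))
        = Finset.map (Fin.castLEEmb hm) Finset.univ := by
      ext i
      simp only [Finset.mem_filter, Finset.mem_univ, true_and, Finset.mem_map, Fin.castLEEmb]
      constructor
      · intro hi; exact ⟨⟨i, hi⟩, Fin.ext rfl⟩
      · rintro ⟨a, rfl⟩; exact a.isLt
    rw [this, Finset.card_map, Finset.card_univ, Fintype.card_fin]
  have c2 := Finset.card_filter_add_card_filter_not (s := (Finset.univ : Finset (Fin (2 * N))))
      (p := fun i => (i : ℕ) < m)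
  rw [Finset.card_univ, Fintype.card_fin] at c2
  omega

end XEval


def pairEquiv (N : ℕ) : Fin N × Bool ≃ Fin (2 * N) where
  toFun p := if p.2 then ⟨2 * N - 1 - (p.1 : ℕ), by have := p.1.isLt; omega⟩
             else ⟨(p.1 : ℕ), by have := p.1.isLt; omega⟩
  invFun i := if h : (i : ℕ) < N then (⟨(i : ℕ), h⟩, false)
              else (⟨2 * N - 1 - (i : ℕ), by have := i.isLt; omega⟩, true)
  left_inv := by
    rintro ⟨j, c⟩
    have hj := j.isLt
    cases c
    · simp
    · simp only [if_true]
      rw [dif_neg (by omega)]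
      refine Prod.ext (Fin.ext ?_) rfl
      simp; omega
  right_inv := by
    intro i
    have hi := i.isLt
    by_cases h : (i : ℕ) < N
    · beta_reduce; rw [dif_pos h]; simp
    · beta_reduce; rw [dif_neg h]
      simp only [if_true]
      exact Fin.ext (by simp; omega)

lemma pairEquiv_false {N : ℕ} (j : Fin N) :
    pairEquiv N (j, false) = Fin.castLE (Nat.le_mul_of_pos_left N Nat.two_pos) j := rfl

lemma pairEquiv_true {N : ℕ} (j : Fin N) :
    pairEquiv N (j, true) = (Fin.castLE (Nat.le_mul_of_pos_left N Nat.two_pos) j).rev := by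
  refine Fin.ext ?_
  have := j.isLt
  simp [pairEquiv, Fin.val_rev]
  omega

lemma pairEquiv_symm_snd {N : ℕ} (i : Fin (2 * N)) :
    ((pairEquiv N).symm i).2 = ¬ ((i : ℕ) < N) := by
  by_cases h : (i : ℕ) < N
  · simp [pairEquiv, dif_pos h, h]
  · simp [pairEquiv, dif_neg h, h]

def flipP {N : ℕ} (ε : Fin N → Bool) : Equiv.Perm (Fin N × Bool) :=
  Equiv.prodCongrRight (fun j => if ε j then Equiv.swap false true else Equiv.refl Bool)

def halfP {N : ℕ} (α β : Equiv.Perm (Fin N)) : Equiv.Perm (Fin N × Bool) :=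
  Equiv.prodCongrLeft (fun c : Bool => if c then β else α)

def bigP {N : ℕ} (α β : Equiv.Perm (Fin N)) (ε : Fin N → Bool) : Equiv.Perm (Fin (2 * N)) :=
  (pairEquiv N).permCongr (halfP α β * flipP ε)

lemma bigP_apply_false {N : ℕ} (α β : Equiv.Perm (Fin N)) (ε : Fin N → Bool) (j : Fin N) :
    bigP α β ε (pairEquiv N (j, false)) = pairEquiv N ((if ε j then β j else α j), ε j) := by
  cases hε : ε j <;>
    simp [bigP, halfP, flipP, Equiv.permCongr_apply, Equiv.Perm.mul_apply, hε]

lemma bigP_apply_true {N : ℕ} (α β : Equiv.Perm (Fin N)) (ε : Fin N → Bool) (j : Fin N) :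
    bigP α β ε (pairEquiv N (j, true)) = pairEquiv N ((if ε j then α j else β j), !(ε j)) := by
  cases hε : ε j <;>
    simp [bigP, halfP, flipP, Equiv.permCongr_apply, Equiv.Perm.mul_apply, hε]

lemma ksgn_inv (κ : ℂ) {n : ℕ} (σ : Equiv.Perm (Fin n)) : ksgn κ σ⁻¹ = ksgn κ σ := by
  unfold ksgn
  split
  · rw [Equiv.Perm.sign_inv]
  · rfl

lemma ksgn_mul_self (κ : ℂ) {n : ℕ} (σ : Equiv.Perm (Fin n)) : ksgn κ σ * ksgn κ σ = 1 := by
  unfold ksgn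
  split
  · rw [← Int.cast_mul, ← Units.val_mul, Int.units_mul_self, Units.val_one, Int.cast_one]
  · ring

lemma ksgn_bigP (κ : ℂ) (hκ : κ = 1 ∨ κ = -1) {N : ℕ} (α β : Equiv.Perm (Fin N))
    (ε : Fin N → Bool) :
    ksgn κ (bigP α β ε) = ksgn κ α * ksgn κ β * ∏ j : Fin N, (if ε j then κ else 1) := by
  rcases hκ with hκ | hκ
  · subst hκ
    have h1 : (1 : ℂ) ≠ -1 := by norm_num
    simp [ksgn, h1]
  · subst hκ
    have h1 : Equiv.Perm.sign (bigP α β ε)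
        = Equiv.Perm.sign α * Equiv.Perm.sign β
          * ∏ j : Fin N, (if ε j then (-1 : ℤˣ) else 1) := by
      rw [bigP, Equiv.Perm.sign_permCongr, map_mul]
      congr 1
      · rw [halfP, Equiv.Perm.sign_prodCongrLeft, Fintype.prod_bool]
        simp [mul_comm]
      · rw [flipP, Equiv.Perm.sign_prodCongrRight]
        refine Finset.prod_congr rfl (fun j _ => ?_)
        by_cases hε : ε j
        · simp [hε, Equiv.Perm.sign_swap (by decide : (false : Bool) ≠ true)]
        · simp [hε]
    simp only [ksgn, if_pos rfl, h1]
    push_cast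
    have h2 : ∀ j : Fin N, ((((if ε j = true then (-1 : ℤˣ) else 1) : ℤˣ) : ℤ) : ℂ)
        = (if ε j = true then (-1 : ℂ) else 1) := by
      intro j; by_cases hε : ε j = true <;> simp [hε]
    rw [Finset.prod_congr rfl (fun j _ => h2 j)]

lemma ksgn_mul (κ : ℂ) {n : ℕ} (σ τ : Equiv.Perm (Fin n)) :
    ksgn κ (σ * τ) = ksgn κ σ * ksgn κ τ := by
  unfold ksgn
  split
  · rw [map_mul]; push_cast; ring
  · ring

def gamP {N : ℕ} (α β : Equiv.Perm (Fin N)) : Equiv.Perm (Fin N) :=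
  Fin.revPerm * β * α⁻¹ * Fin.revPerm

lemma ksgn_gamP (κ : ℂ) {N : ℕ} (α β : Equiv.Perm (Fin N)) :
    ksgn κ (gamP α β) = ksgn κ α * ksgn κ β := by
  rw [gamP, ksgn_mul, ksgn_mul, ksgn_mul, ksgn_inv]
  have h := ksgn_mul_self κ (Fin.revPerm : Equiv.Perm (Fin N))
  calc ksgn κ Fin.revPerm * ksgn κ β * ksgn κ α * ksgn κ Fin.revPerm
      = (ksgn κ Fin.revPerm * ksgn κ Fin.revPerm) * (ksgn κ α * ksgn κ β) := by ring
    _ = ksgn κ α * ksgn κ β := by rw [h, one_mul]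

section Val

variable {V : Type*} [AddCommGroup V] [Module ℂ V]
set_option linter.unusedSectionVars false

variable {N : ℕ} (hmn : N + N = 2 * N) (a b : Fin N → V)

lemma x_pair_false (j : Fin N) :
    Fin.append (fun i => a i.rev) b (Fin.cast hmn.symm (pairEquiv N (j, false))) = a j.rev := by
  have h : ((pairEquiv N (j, false) : ℕ)) < N := j.isLt
  have e : Fin.cast hmn.symm (pairEquiv N (j, false)) = Fin.castAdd N j := rfl
  rw [e, Fin.append_left]

lemma x_pair_true (j : Fin N) :
    Fin.append (fun i => a i.rev) b (Fin.cast hmn.symm (pairEquiv N (j, true))) = b j.rev := by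
  have hj := j.isLt
  have e : Fin.cast hmn.symm (pairEquiv N (j, true)) = Fin.natAdd N j.rev := by
    refine Fin.ext ?_
    simp [pairEquiv, Fin.val_rev]
    omega
  rw [e, Fin.append_right]

end Val

section Term

variable {V : Type*} [AddCommGroup V] [Module ℂ V]
set_option linter.unusedSectionVars false

lemma term_bigP (κ : ℂ) (hκ : κ = 1 ∨ κ = -1)
    (B : V →ₗ[ℂ] V →ₗ[ℂ] ℂ) (hBsym : ∀ x y, B x y = κ * B y x)
    {N : ℕ} (hmn : N + N = 2 * N) (a b : Fin N → V)
    (α β : Equiv.Perm (Fin N)) (ε : Fin N → Bool) :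
    ksgn κ (bigP α β ε) * ∏ j : Fin N,
      B (Fin.append (fun i => a i.rev) b (Fin.cast hmn.symm (bigP α β ε (pairEquiv N (j, false)))))
        (Fin.append (fun i => a i.rev) b (Fin.cast hmn.symm (bigP α β ε (pairEquiv N (j, true)))))
    = ksgn κ (gamP α β) * ∏ i : Fin N, B (a i) (b (gamP α β i)) := by
  have hfac : ∀ j : Fin N,
      B (Fin.append (fun i => a i.rev) b (Fin.cast hmn.symm (bigP α β ε (pairEquiv N (j, false)))))
        (Fin.append (fun i => a i.rev) b (Fin.cast hmn.symm (bigP α β ε (pairEquiv N (j, true)))))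
      = (if ε j then κ else 1) * B (a (α j).rev) (b (β j).rev) := by
    intro j
    rw [bigP_apply_false, bigP_apply_true]
    by_cases hε : ε j
    · simp only [hε, if_true, Bool.not_true]
      rw [x_pair_true hmn a b (β j), x_pair_false hmn a b (α j)]
      exact hBsym _ _
    · simp only [if_neg hε, Bool.not_eq_true']
      have hε' : ε j = false := by simp at hε; exact hε
      simp only [hε', Bool.not_false]
      rw [x_pair_false hmn a b (α j), x_pair_true hmn a b (β j), one_mul]
  rw [Finset.prod_congr rfl (fun j _ => hfac j), Finset.prod_mul_distrib]
  have hsq : (∏ j : Fin N, (if ε j then κ else 1)) * (∏ j : Fin N, (if ε j then κ else 1)) = 1 := by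
    rw [← Finset.prod_mul_distrib]
    refine Finset.prod_eq_one fun j _ => ?_
    rcases hκ with hκ | hκ <;> subst hκ <;> by_cases hε : ε j <;> simp [hε]
  have hprod : ∏ j : Fin N, B (a (α j).rev) (b (β j).rev)
      = ∏ i : Fin N, B (a i) (b (gamP α β i)) := by
    refine (Fintype.prod_equiv ((Fin.revPerm : Equiv.Perm (Fin N)).trans α.symm)
      (fun i => B (a i) (b (gamP α β i)))
      (fun j => B (a (α j).rev) (b (β j).rev)) (fun i => ?_)).symm
    have h2 : gamP α β i = (β (α.symm (Fin.rev i))).rev := rfl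
    simp only [Equiv.trans_apply, Fin.revPerm_apply, Equiv.apply_symm_apply, Fin.rev_rev, h2]
  rw [hprod, ksgn_bigP κ hκ, ksgn_gamP]
  calc ksgn κ α * ksgn κ β * (∏ j : Fin N, if ε j = true then κ else 1) *
        ((∏ j : Fin N, if ε j = true then κ else 1) * ∏ i : Fin N, B (a i) (b (gamP α β i)))
      = ((∏ j : Fin N, if ε j = true then κ else 1) * (∏ j : Fin N, if ε j = true then κ else 1))
        * (ksgn κ α * ksgn κ β * ∏ i : Fin N, B (a i) (b (gamP α β i))) := by ring
    _ = ksgn κ α * ksgn κ β * ∏ i : Fin N, B (a i) (b (gamP α β i)) := by rw [hsq, one_mul]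

end Term

lemma pairEquiv_val_lt {N : ℕ} (k : Fin N) (c : Bool) :
    ((pairEquiv N (k, c) : ℕ) < N) ↔ c = false := by
  have hk := k.isLt
  cases c
  · simpa [pairEquiv] using hk
  · simp only [pairEquiv, Equiv.coe_fn_mk]
    norm_num
    omega

lemma pairEquiv_symm_snd_false {N : ℕ} (i : Fin (2 * N)) :
    ((pairEquiv N).symm i).2 = false ↔ ((i : ℕ) < N) := by
  by_cases h : (i : ℕ) < N
  · simp only [pairEquiv, Equiv.coe_fn_symm_mk, dif_pos h]
    simpa using h
  · simp only [pairEquiv, Equiv.coe_fn_symm_mk, dif_neg h]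
    simpa using h

lemma pairEquiv_symm_snd_true {N : ℕ} (i : Fin (2 * N)) :
    ((pairEquiv N).symm i).2 = true ↔ ¬ ((i : ℕ) < N) := by
  rw [← Bool.not_eq_false, not_iff_not, pairEquiv_symm_snd_false]

theorem aux2 {V : Type*} [AddCommGroup V] [Module ℂ V]
    (κ : ℂ) (hκ : κ = 1 ∨ κ = -1)
    (B : V →ₗ[ℂ] V →ₗ[ℂ] ℂ) (hBsym : ∀ x y, B x y = κ * B y x)
    {N : ℕ} (hmn : N + N = 2 * N) (a b : Fin N → V)
    (ha : ∀ i j, B (a i) (a j) = 0) (hb : ∀ i j, B (b i) (b j) = 0) :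
    (N.factorial : ℂ)⁻¹ * ∑ σ : Equiv.Perm (Fin (2 * N)), ksgn κ σ *
        ∏ j : Fin N,
          B (Fin.append (fun i => a i.rev) b (Fin.cast hmn.symm (σ (Fin.castLE (Nat.le_mul_of_pos_left N Nat.two_pos) j))))
            (Fin.append (fun i => a i.rev) b
              (Fin.cast hmn.symm (σ (Fin.castLE (Nat.le_mul_of_pos_left N Nat.two_pos) j).rev))) =
      2 ^ N * ∑ σ : Equiv.Perm (Fin N), ksgn κ σ *
        ∏ j : Fin N, B (a j) (b (σ j)) := by
  classical
  set X : Fin (2 * N) → V := fun i => Fin.append (fun i => a i.rev) b (Fin.cast hmn.symm i)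
    with hX
  set T : Equiv.Perm (Fin (2 * N)) → ℂ := fun σ => ksgn κ σ *
      ∏ j : Fin N, B (X (σ (pairEquiv N (j, false)))) (X (σ (pairEquiv N (j, true)))) with hT
  have hconv : ∀ σ : Equiv.Perm (Fin (2 * N)), (ksgn κ σ *
      ∏ j : Fin N,
        B (Fin.append (fun i => a i.rev) b (Fin.cast hmn.symm (σ (Fin.castLE (Nat.le_mul_of_pos_left N Nat.two_pos) j))))
          (Fin.append (fun i => a i.rev) b
            (Fin.cast hmn.symm (σ (Fin.castLE (Nat.le_mul_of_pos_left N Nat.two_pos) j).rev)))) = T σ := by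
    intro σ
    rw [hT]
    congr 1
    refine Finset.prod_congr rfl fun j _ => ?_
    rw [pairEquiv_false, pairEquiv_true]
  rw [Finset.sum_congr rfl fun σ _ => hconv σ]
  -- restrict to the support
  set P : Equiv.Perm (Fin (2 * N)) → Prop := fun σ => ∀ j : Fin N,
      ¬ (((σ (pairEquiv N (j, false)) : ℕ) < N) ↔ ((σ (pairEquiv N (j, true)) : ℕ) < N))
    with hP
  have hTzero : ∀ σ, ¬ P σ → T σ = 0 := by
    intro σ hσ
    simp only [hP, not_forall, not_not] at hσ
    obtain ⟨j, hj⟩ := hσ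
    simp only [hT]
    have : B (X (σ (pairEquiv N (j, false)))) (X (σ (pairEquiv N (j, true)))) = 0 :=
      x_zero hmn a b B ha hb _ _ hj
    rw [Finset.prod_eq_zero (Finset.mem_univ j) this, mul_zero]
  have hstep1 : ∑ σ : Equiv.Perm (Fin (2 * N)), T σ
      = ∑ σ ∈ Finset.univ.filter P, T σ := by
    refine (Finset.sum_filter_of_ne fun σ _ hσ => ?_).symm
    by_contra hPσ
    exact hσ (hTzero σ hPσ)
  -- the bijection with triples
  have hstep2 : ∑ σ ∈ Finset.univ.filter P, T σ
      = ∑ t : Equiv.Perm (Fin N) × Equiv.Perm (Fin N) × (Fin N → Bool),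
          ksgn κ (gamP t.1 t.2.1) * ∏ i : Fin N, B (a i) (b (gamP t.1 t.2.1 i)) := by
    refine (Finset.sum_bij (fun t _ => bigP t.1 t.2.1 t.2.2) ?_ ?_ ?_ ?_).symm
    · -- membership
      intro t ht
      obtain ⟨α, β, ε⟩ := t
      simp only [Finset.mem_filter, Finset.mem_univ, true_and, hP]
      intro j
      rw [bigP_apply_false, bigP_apply_true, pairEquiv_val_lt, pairEquiv_val_lt]
      cases hε : ε j <;> simp
    · -- injectivity
      intro t₁ ht₁ t₂ ht₂ hbigeq
      obtain ⟨α₁, β₁, ε₁⟩ := t₁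
      obtain ⟨α₂, β₂, ε₂⟩ := t₂
      simp only at hbigeq ⊢
      have h0 : ∀ j : Fin N, bigP α₁ β₁ ε₁ (pairEquiv N (j, false))
          = bigP α₂ β₂ ε₂ (pairEquiv N (j, false)) := fun j => by rw [hbigeq]
      have h1 : ∀ j : Fin N, bigP α₁ β₁ ε₁ (pairEquiv N (j, true))
          = bigP α₂ β₂ ε₂ (pairEquiv N (j, true)) := fun j => by rw [hbigeq]
      have hε : ε₁ = ε₂ := by
        funext j
        have := h0 j
        rw [bigP_apply_false, bigP_apply_false] at this
        exact (Prod.mk.injEq _ _ _ _ ▸ (pairEquiv N).injective this).2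
      subst hε
      have hfst0 : ∀ j : Fin N, (if ε₁ j then β₁ j else α₁ j) = (if ε₁ j then β₂ j else α₂ j) :=
        fun j => by
          have := h0 j
          rw [bigP_apply_false, bigP_apply_false] at this
          exact (Prod.mk.injEq _ _ _ _ ▸ (pairEquiv N).injective this).1
      have hfst1 : ∀ j : Fin N, (if ε₁ j then α₁ j else β₁ j) = (if ε₁ j then α₂ j else β₂ j) :=
        fun j => by
          have := h1 j
          rw [bigP_apply_true, bigP_apply_true] at this
          exact (Prod.mk.injEq _ _ _ _ ▸ (pairEquiv N).injective this).1
      have hα : α₁ = α₂ := by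
        refine Equiv.ext fun j => ?_
        rcases hεj : ε₁ j with _ | _
        · have := hfst0 j; rwa [hεj, if_neg (by simp), if_neg (by simp)] at this
        · have := hfst1 j; rwa [hεj, if_pos rfl, if_pos rfl] at this
      have hβ : β₁ = β₂ := by
        refine Equiv.ext fun j => ?_
        rcases hεj : ε₁ j with _ | _
        · have := hfst1 j; rwa [hεj, if_neg (by simp), if_neg (by simp)] at this
        · have := hfst0 j; rwa [hεj, if_pos rfl, if_pos rfl] at this
      rw [hα, hβ]
    · -- surjectivity
      intro σ hσ
      simp only [Finset.mem_filter, Finset.mem_univ, true_and, hP] at hσ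
      set ε : Fin N → Bool := fun j => ((pairEquiv N).symm (σ (pairEquiv N (j, false)))).2
        with hε
      have fact1 : ∀ j : Fin N,
          ((pairEquiv N).symm (σ (pairEquiv N (j, ε j)))).2 = false := by
        intro j
        rcases hεj : ε j with _ | _
        · exact hεj
        · rw [pairEquiv_symm_snd_false]
          have h0 : ¬ ((σ (pairEquiv N (j, false)) : ℕ) < N) := by
            rw [← pairEquiv_symm_snd_true]; rw [hε] at hεj; exact hεj
          have := hσ j
          tauto
      have fact2 : ∀ j : Fin N,
          ((pairEquiv N).symm (σ (pairEquiv N (j, !(ε j))))).2 = true := by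
        intro j
        rcases hεj : ε j with _ | _
        · rw [pairEquiv_symm_snd_true]
          have h0 : ((σ (pairEquiv N (j, false)) : ℕ) < N) := by
            rw [← pairEquiv_symm_snd_false]; rw [hε] at hεj; exact hεj
          have := hσ j
          simp only [Bool.not_false]
          tauto
        · simp only [Bool.not_true]
          rw [hε] at hεj; exact hεj
      set u : Fin N → Fin N := fun j => ((pairEquiv N).symm (σ (pairEquiv N (j, ε j)))).1
        with hu
      set v : Fin N → Fin N := fun j => ((pairEquiv N).symm (σ (pairEquiv N (j, !(ε j))))).1
        with hv
      have eqU : ∀ j : Fin N, σ (pairEquiv N (j, ε j)) = pairEquiv N (u j, false) := by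
        intro j
        conv_lhs => rw [← (pairEquiv N).apply_symm_apply (σ (pairEquiv N (j, ε j)))]
        congr 1
        exact Prod.ext rfl (fact1 j)
      have eqV : ∀ j : Fin N, σ (pairEquiv N (j, !(ε j))) = pairEquiv N (v j, true) := by
        intro j
        conv_lhs => rw [← (pairEquiv N).apply_symm_apply (σ (pairEquiv N (j, !(ε j))))]
        congr 1
        exact Prod.ext rfl (fact2 j)
      have hui : Function.Injective u := by
        intro j₁ j₂ h
        have : σ (pairEquiv N (j₁, ε j₁)) = σ (pairEquiv N (j₂, ε j₂)) := by
          rw [eqU j₁, eqU j₂, h]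
        have := (pairEquiv N).injective (σ.injective this)
        exact (Prod.mk.injEq _ _ _ _ ▸ this).1
      have hvi : Function.Injective v := by
        intro j₁ j₂ h
        have : σ (pairEquiv N (j₁, !(ε j₁))) = σ (pairEquiv N (j₂, !(ε j₂))) := by
          rw [eqV j₁, eqV j₂, h]
        have := (pairEquiv N).injective (σ.injective this)
        exact (Prod.mk.injEq _ _ _ _ ▸ this).1
      set α : Equiv.Perm (Fin N) := Equiv.ofBijective u (Finite.injective_iff_bijective.mp hui)
        with hα
      set β : Equiv.Perm (Fin N) := Equiv.ofBijective v (Finite.injective_iff_bijective.mp hvi)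
        with hβ
      refine ⟨⟨α, β, ε⟩, Finset.mem_univ _, ?_⟩
      refine Equiv.ext fun i => ?_
      rcases hEi : (pairEquiv N).symm i with ⟨j, c⟩
      have hi : pairEquiv N (j, c) = i := by
        rw [← hEi]; exact (pairEquiv N).apply_symm_apply i
      rw [← hi]
      cases c
      · rw [bigP_apply_false]
        rcases hεj : ε j with _ | _
        · have h := eqU j
          rw [hεj] at h
          simpa [hα, Equiv.ofBijective_apply, hεj] using h.symm
        · have h := eqV j
          rw [hεj] at h
          simp only [Bool.not_true] at h
          simpa [hβ, Equiv.ofBijective_apply, hεj] using h.symm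
      · rw [bigP_apply_true]
        rcases hεj : ε j with _ | _
        · have h := eqV j
          rw [hεj] at h
          simp only [Bool.not_false] at h
          simpa [hβ, Equiv.ofBijective_apply, hεj] using h.symm
        · have h := eqU j
          rw [hεj] at h
          simpa [hα, Equiv.ofBijective_apply, hεj] using h.symm
    · -- values
      intro t ht
      obtain ⟨α, β, ε⟩ := t
      exact (term_bigP κ hκ B hBsym hmn a b α β ε).symm
  rw [hstep1, hstep2]
  have hβsum : ∀ α : Equiv.Perm (Fin N), ∀ g : Equiv.Perm (Fin N) → ℂ,
      ∑ β : Equiv.Perm (Fin N), g (gamP α β) = ∑ ρ : Equiv.Perm (Fin N), g ρ := by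
    intro α g
    refine Fintype.sum_equiv
      ((Equiv.mulRight (α⁻¹ * Fin.revPerm)).trans (Equiv.mulLeft Fin.revPerm))
      (fun β => g (gamP α β)) g (fun β => ?_)
    congr 1
  have hsum : ∑ t : Equiv.Perm (Fin N) × Equiv.Perm (Fin N) × (Fin N → Bool),
      ksgn κ (gamP t.1 t.2.1) * ∏ i : Fin N, B (a i) (b (gamP t.1 t.2.1 i))
      = (N.factorial : ℂ) * (2 ^ N * ∑ ρ : Equiv.Perm (Fin N),
          ksgn κ ρ * ∏ i : Fin N, B (a i) (b (ρ i))) := by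
    rw [Fintype.sum_prod_type]
    have hinner : ∀ α : Equiv.Perm (Fin N),
        (∑ p : Equiv.Perm (Fin N) × (Fin N → Bool),
          ksgn κ (gamP α p.1) * ∏ i : Fin N, B (a i) (b (gamP α p.1 i)))
        = 2 ^ N * ∑ ρ : Equiv.Perm (Fin N), ksgn κ ρ * ∏ i : Fin N, B (a i) (b (ρ i)) := by
      intro α
      rw [Fintype.sum_prod_type]
      have h1 : ∀ β : Equiv.Perm (Fin N),
          (∑ _ε : Fin N → Bool, ksgn κ (gamP α β) * ∏ i : Fin N, B (a i) (b (gamP α β i)))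
          = (2 : ℂ) ^ N * (ksgn κ (gamP α β) * ∏ i : Fin N, B (a i) (b (gamP α β i))) := by
        intro β
        rw [Finset.sum_const, Finset.card_univ, nsmul_eq_mul]
        congr 1
        rw [Fintype.card_fun]
        push_cast
        simp
      rw [Finset.sum_congr rfl fun β _ => h1 β, ← Finset.mul_sum]
      congr 1
      exact hβsum α (fun ρ => ksgn κ ρ * ∏ i : Fin N, B (a i) (b (ρ i)))
    rw [Finset.sum_congr rfl fun α _ => hinner α, Finset.sum_const, Finset.card_univ,
      nsmul_eq_mul]
    congr 1
    rw [Fintype.card_perm, Fintype.card_fin]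
  rw [hsum, ← mul_assoc, inv_mul_cancel₀ (Nat.cast_ne_zero.mpr (Nat.factorial_ne_zero N)),
    one_mul]



/-- Evaluation of the free-field amplitude
`A = (1/N!) Σ_{σ ∈ S_{2N}} κ^{|σ|} Π_{j=1}^{N} B (x_{σ(j)}) (x_{σ(2N+1-j)})` of the list
`x = (a_m, …, a₁, b₁, …, b_n)` (with `m + n = 2N`) when `B` is `κ`-symmetric and vanishes
on pairs of `a`'s and on pairs of `b`'s: `A = 0` if `m ≠ n`, and
`A = 2^n Σ_{σ ∈ S_n} κ^{|σ|} Π_j B (a_j) (b_{σ(j)})` if `m = n`. -/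
theorem stmt_10 {V : Type*} [AddCommGroup V] [Module ℂ V]
    (κ : ℂ) (hκ : κ = 1 ∨ κ = -1)
    (B : V →ₗ[ℂ] V →ₗ[ℂ] ℂ) (hBsym : ∀ x y, B x y = κ * B y x)
    (m n N : ℕ) (hmn : m + n = 2 * N)
    (a : Fin m → V) (b : Fin n → V)
    (ha : ∀ i j, B (a i) (a j) = 0) (hb : ∀ i j, B (b i) (b j) = 0) :
    (m ≠ n →
      (N.factorial : ℂ)⁻¹ * ∑ σ : Equiv.Perm (Fin (2 * N)), ksgn κ σ *
        ∏ j : Fin N,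
          B (Fin.append (fun i => a i.rev) b (Fin.cast hmn.symm (σ (Fin.castLE (by omega) j))))
            (Fin.append (fun i => a i.rev) b
              (Fin.cast hmn.symm (σ (Fin.castLE (by omega : N ≤ 2 * N) j).rev))) = 0) ∧
    (∀ h : m = n,
      (N.factorial : ℂ)⁻¹ * ∑ σ : Equiv.Perm (Fin (2 * N)), ksgn κ σ *
        ∏ j : Fin N,
          B (Fin.append (fun i => a i.rev) b (Fin.cast hmn.symm (σ (Fin.castLE (by omega) j))))
            (Fin.append (fun i => a i.rev) b
              (Fin.cast hmn.symm (σ (Fin.castLE (by omega : N ≤ 2 * N) j).rev))) =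
      2 ^ n * ∑ σ : Equiv.Perm (Fin n), ksgn κ σ *
        ∏ j : Fin n, B (a (Fin.cast h.symm j)) (b (σ j))) := by
  constructor
  · intro hne
    have hz : ∀ σ ∈ (Finset.univ : Finset (Equiv.Perm (Fin (2 * N)))), ksgn κ σ *
        ∏ j : Fin N,
          B (Fin.append (fun i => a i.rev) b (Fin.cast hmn.symm (σ (Fin.castLE (by omega) j))))
            (Fin.append (fun i => a i.rev) b
              (Fin.cast hmn.symm (σ (Fin.castLE (by omega : N ≤ 2 * N) j).rev))) = 0 := by
      intro σ _
      have hex : ∃ j : Fin N, (((σ (Fin.castLE (by omega) j) : ℕ) < m) ↔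
          ((σ (Fin.castLE (by omega : N ≤ 2 * N) j).rev : ℕ) < m)) := by
        by_contra hc
        push_neg at hc
        refine hne (mixed_all_imp_eq hmn σ fun j => ?_)
        have := hc j
        omega
      obtain ⟨j, hj⟩ := hex
      rw [Finset.prod_eq_zero (Finset.mem_univ j) (x_zero hmn a b B ha hb _ _ hj), mul_zero]
    rw [Finset.sum_eq_zero hz, mul_zero]
  · intro h
    subst h
    have hN : N = m := by omega
    subst hN
    have h2 := aux2 κ hκ B hBsym hmn a b ha hb
    simpa only [Fin.cast_refl, Fin.cast_eq_self, id] using h2
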